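/- Let H be an n×n real positive semidefinite symmetric matrix, let A be an m×n real matrix with full column rank (rank A = n), and let s, y ∈ ℝ^m have all components strictly positive. Let S and Y denote the m×m diagonal matrices with diagonal entries s_i and y_i respectively, and let I be the m×m identity matrix. Then the (n+2m)×(n+2m) block matrix [[H, 0, Aᵀ], [A, I, 0], [0, Y, S]] is nonsingular. -/

import Mathlib

open Matrix

lemma mulVec_eq_zero_of_rank {n m : ℕ} (A : Matrix (Fin m) (Fin n) ℝ)
    (hA : A.rank = n) {x : Fin n → ℝ} (hx : A *ᵥ x = 0) : x = 0 := by
  have hker : LinearMap.ker A.mulVecLin = ⊥ := by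
    have h1 := LinearMap.finrank_range_add_finrank_ker A.mulVecLin
    rw [Module.finrank_pi] at h1
    have h0 : Module.finrank ℝ (LinearMap.range A.mulVecLin) = n := hA
    rw [Fintype.card_fin] at h1
    have h2 : Module.finrank ℝ (LinearMap.ker A.mulVecLin) = 0 := by omega
    exact Submodule.finrank_eq_zero.mp h2
  exact (LinearMap.ker_eq_bot.mp hker) (show A.mulVecLin x = A.mulVecLin 0 by simpa using hx)

/-- If `H ⪰ 0` is symmetric, `A` has full column rank, and `s, y > 0`
    componentwise, then the block matrix `[[H, 0, Aᵀ], [A, I, 0], [0, Y, S]]`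
    (with `S = diagonal s`, `Y = diagonal y`) is nonsingular. -/
theorem newtonSystem_nonsingular {n m : ℕ}
    (H : Matrix (Fin n) (Fin n) ℝ)
    (A : Matrix (Fin m) (Fin n) ℝ)
    (s y : Fin m → ℝ)
    (hH : H.PosSemidef) (hA : A.rank = n)
    (hs : ∀ i, 0 < s i) (hy : ∀ i, 0 < y i) :
    (Matrix.fromBlocks
        H (Matrix.fromCols (0 : Matrix (Fin n) (Fin m) ℝ) Aᵀ)
        (Matrix.fromRows A (0 : Matrix (Fin m) (Fin n) ℝ))
        (Matrix.fromBlocks (1 : Matrix (Fin m) (Fin m) ℝ) (0 : Matrix (Fin m) (Fin m) ℝ)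
          (Matrix.diagonal y) (Matrix.diagonal s))).det ≠ 0 := by
  rw [Ne, ← Matrix.exists_mulVec_eq_zero_iff]
  rintro ⟨v, hv, hMv⟩
  apply hv
  set x : Fin n → ℝ := v ∘ Sum.inl with hxdef
  set w : Fin m ⊕ Fin m → ℝ := v ∘ Sum.inr with hwdef
  set p : Fin m → ℝ := w ∘ Sum.inl with hpdef
  set q : Fin m → ℝ := w ∘ Sum.inr with hqdef
  rw [fromBlocks_mulVec] at hMv
  have h1 : H *ᵥ x + Aᵀ *ᵥ q = 0 := by
    funext i
    have := congrFun hMv (Sum.inl i)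
    simpa [mulVec, dotProduct, fromCols, Fintype.sum_sum_type, x, w, q] using this
  have h23 : (Matrix.fromRows A 0) *ᵥ x +
      (Matrix.fromBlocks 1 0 (Matrix.diagonal y) (Matrix.diagonal s)) *ᵥ w = 0 := by
    funext i
    exact congrFun hMv (Sum.inr i)
  rw [fromRows_mulVec, fromBlocks_mulVec] at h23
  have h2 : A *ᵥ x + p = 0 := by
    funext i
    have := congrFun h23 (Sum.inl i)
    simpa [p, w] using this
  have h3 : ∀ i, y i * p i + s i * q i = 0 := by
    intro i
    have := congrFun h23 (Sum.inr i)
    simpa [mulVec_diagonal, p, q, w] using this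
  -- take inner product of first equation with x
  have key : x ⬝ᵥ (H *ᵥ x) + ∑ i, (y i / s i) * p i ^ 2 = 0 := by
    have e1 : x ⬝ᵥ (H *ᵥ x + Aᵀ *ᵥ q) = 0 := by rw [h1]; simp
    have e2 : x ⬝ᵥ (Aᵀ *ᵥ q) = (A *ᵥ x) ⬝ᵥ q := by
      rw [dotProduct_mulVec, vecMul_transpose]
    have e3 : A *ᵥ x = -p := by
      have := h2; funext i
      have := congrFun h2 i
      simp only [Pi.add_apply, Pi.zero_apply] at this
      simp [Pi.neg_apply]; linarith
    have e4 : ∀ i, q i = -(y i / s i) * p i := by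
      intro i
      have h := h3 i
      have hsi : s i ≠ 0 := (hs i).ne'
      field_simp
      linarith
    rw [dotProduct_add, e2, e3] at e1
    rw [← e1]
    congr 1
    simp only [dotProduct, Pi.neg_apply]
    apply Finset.sum_congr rfl
    intro i _
    rw [e4 i]
    have hsi : s i ≠ 0 := (hs i).ne'
    field_simp
  have hHx : 0 ≤ x ⬝ᵥ (H *ᵥ x) := by simpa using hH.dotProduct_mulVec_nonneg x
  have hsum : 0 ≤ ∑ i, (y i / s i) * p i ^ 2 :=
    Finset.sum_nonneg fun i _ => mul_nonneg (div_nonneg (hy i).le (hs i).le) (sq_nonneg _)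
  have hsum0 : ∑ i, (y i / s i) * p i ^ 2 = 0 := by linarith
  have hp : p = 0 := by
    funext i
    have := (Finset.sum_eq_zero_iff_of_nonneg
      (fun i _ => mul_nonneg (div_nonneg (hy i).le (hs i).le) (sq_nonneg (p i)))).mp hsum0
      i (Finset.mem_univ i)
    have hyi := hy i; have hsi := hs i
    have : p i ^ 2 = 0 := by
      by_contra hne
      exact hne (by
        have hd : y i / s i ≠ 0 := ne_of_gt (div_pos hyi hsi)
        exact (mul_eq_zero.mp this).resolve_left hd)
    exact pow_eq_zero_iff (by norm_num) |>.mp this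
  have hAx : A *ᵥ x = 0 := by
    funext i
    have := congrFun h2 i
    simp only [Pi.add_apply, Pi.zero_apply] at this
    have hpi : p i = 0 := congrFun hp i
    simp [Pi.zero_apply]; linarith
  have hx0 : x = 0 := mulVec_eq_zero_of_rank A hA hAx
  have hq : q = 0 := by
    funext i
    have h := h3 i
    have hpi : p i = 0 := congrFun hp i
    rw [hpi] at h
    have := hs i
    simp only [mul_zero, zero_add] at h
    have : q i = 0 := by
      rcases mul_eq_zero.mp h with h' | h'
      · exact absurd h' (ne_of_gt (hs i))
      · exact h'
    simpa using this
  funext i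
  cases i with
  | inl i => exact congrFun hx0 i
  | inr j =>
    cases j with
    | inl j => exact congrFun hp j
    | inr j => exact congrFun hq j
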